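/- Let ψ = Σ_{i=1}^{d_1} λ_i μ_i ⊗ ν_i be a vector in ℂ^{d_1}⊗ℂ^{d_2} in Schmidt form, i.e., λ_i ≥ 0, {μ_i} an orthonormal family in ℂ^{d_1} and {ν_i} an orthonormal family in ℂ^{d_2}. Then for every unit vector φ ∈ ℂ^{d_1}⊗ℂ^{d_2}, one has ⟨φ, (ψψ*)^{T_A} φ⟩ ≤ max_i λ_i², where ψψ* denotes the rank-one matrix |ψ⟩⟨ψ| and T_A is the partial transpose with respect to the first tensor factor. -/

import Mathlib

open Matrix Finset ComplexOrder

/-- Partial transpose with respect to the first tensor factor of `ℂ^{d₁} ⊗ ℂ^{d₂}`: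
`(X^{T_A})_{(i,j),(k,l)} = X_{(k,j),(i,l)}`. -/
def ptA {d1 d2 : ℕ} (X : Matrix (Fin d1 × Fin d2) (Fin d1 × Fin d2) ℂ) :
    Matrix (Fin d1 × Fin d2) (Fin d1 × Fin d2) ℂ :=
  fun p q => X (q.1, p.2) (p.1, q.2)

private lemma exch' {α β : Type*} [Fintype α] [Fintype β] (f : α → α → β → β → ℂ) :
    ∑ p : β, ∑ q : β, ∑ a : α, ∑ b : α, f a b p q
      = ∑ a : α, ∑ b : α, ∑ p : β, ∑ q : β, f a b p q :=
  calc ∑ p : β, ∑ q : β, ∑ a : α, ∑ b : α, f a b p q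
      = ∑ p : β, ∑ a : α, ∑ q : β, ∑ b : α, f a b p q :=
        Finset.sum_congr rfl fun _ _ => Finset.sum_comm
    _ = ∑ a : α, ∑ p : β, ∑ q : β, ∑ b : α, f a b p q := Finset.sum_comm
    _ = ∑ a : α, ∑ p : β, ∑ b : α, ∑ q : β, f a b p q :=
        Finset.sum_congr rfl fun _ _ => Finset.sum_congr rfl fun _ _ => Finset.sum_comm
    _ = ∑ a : α, ∑ b : α, ∑ p : β, ∑ q : β, f a b p q :=
        Finset.sum_congr rfl fun _ _ => Finset.sum_comm

private lemma orthonormal_tensor {d1 d2 : ℕ}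
    (μ : Fin d1 → EuclideanSpace ℂ (Fin d1)) (hμ : Orthonormal ℂ μ)
    (ν : Fin d1 → EuclideanSpace ℂ (Fin d2)) (hν : Orthonormal ℂ ν)
    (v : Fin d1 × Fin d1 → EuclideanSpace ℂ (Fin d1 × Fin d2))
    (hv : ∀ ab p, v ab p = (starRingEnd ℂ) (μ ab.2 p.1) * ν ab.1 p.2) :
    Orthonormal ℂ v := by
  rw [orthonormal_iff_ite]
  intro i j
  simp only [PiLp.inner_apply, RCLike.inner_apply, hv, _root_.map_mul, Complex.conj_conj]
  simp only [Fintype.sum_prod_type]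
  have key : ∀ x : Fin d1, ∀ y : Fin d2,
      (starRingEnd ℂ) (μ j.2 x) * ν j.1 y * (μ i.2 x * (starRingEnd ℂ) (ν i.1 y))
        = ((starRingEnd ℂ) (μ j.2 x) * μ i.2 x) * ((starRingEnd ℂ) (ν i.1 y) * ν j.1 y) := by
    intros; ring
  simp_rw [key]
  rw [← Finset.sum_mul_sum]
  have h1 : ∑ x, (starRingEnd ℂ) (μ j.2 x) * μ i.2 x = (inner ℂ (μ j.2) (μ i.2) : ℂ) := by
    simp [PiLp.inner_apply, RCLike.inner_apply, mul_comm]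
  have h2 : ∑ y, (starRingEnd ℂ) (ν i.1 y) * ν j.1 y = (inner ℂ (ν i.1) (ν j.1) : ℂ) := by
    simp [PiLp.inner_apply, RCLike.inner_apply, mul_comm]
  rw [h1, h2, orthonormal_iff_ite.mp hμ, orthonormal_iff_ite.mp hν]
  rcases eq_or_ne i j with h | h
  · simp [h]
  · by_cases h1 : i.1 = j.1 <;> by_cases h2 : i.2 = j.2 <;>
      simp_all [Prod.ext_iff, eq_comm]

/-- for `ψ = Σ_i λ_i μ_i ⊗ ν_i` in Schmidt form and any unit vector `φ`,
`⟨φ, (ψψ*)^{T_A} φ⟩ ≤ max_i λ_i²`. -/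
theorem quadratic_form_partial_transpose_le_max_schmidt_sq
    {d1 d2 : ℕ} (lam : Fin d1 → ℝ) (hlam : ∀ i, 0 ≤ lam i)
    (μ : Fin d1 → EuclideanSpace ℂ (Fin d1)) (hμ : Orthonormal ℂ μ)
    (ν : Fin d1 → EuclideanSpace ℂ (Fin d2)) (hν : Orthonormal ℂ ν)
    (ψ : Fin d1 × Fin d2 → ℂ)
    (hψ : ∀ x, ψ x = ∑ i, (lam i : ℂ) * μ i x.1 * ν i x.2)
    (φ : Fin d1 × Fin d2 → ℂ) (hφ : ∑ x, Complex.normSq (φ x) = 1) :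
    star φ ⬝ᵥ ((ptA (Matrix.vecMulVec ψ (star ψ))) *ᵥ φ)
      ≤ ((⨆ i, lam i ^ 2 : ℝ) : ℂ) := by
  rcases Nat.eq_zero_or_pos d1 with hd | hd
  · subst hd
    have h0 : star φ ⬝ᵥ ((ptA (Matrix.vecMulVec ψ (star ψ))) *ᵥ φ) = 0 := by
      simp [dotProduct]
    have hsup0 : (⨆ i : Fin 0, lam i ^ 2 : ℝ) = 0 := by
      rw [iSup, Set.range_eq_empty, Real.sSup_empty]
    rw [h0, hsup0]
    simp
  haveI : Nonempty (Fin d1) := ⟨⟨0, hd⟩⟩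
  set M : ℝ := ⨆ i, lam i ^ 2 with hM
  have hMle : ∀ i, lam i ^ 2 ≤ M := fun i =>
    le_ciSup (f := fun i => lam i ^ 2) (Set.Finite.bddAbove (Set.finite_range _)) i
  have hM0 : 0 ≤ M := le_trans (sq_nonneg _) (hMle (Classical.arbitrary _))
  -- the Schmidt coefficients of φ against the conjugated tensor basis
  set c : Fin d1 → Fin d1 → ℂ :=
    fun a b => ∑ p, (starRingEnd ℂ) (φ p) * ((starRingEnd ℂ) (μ b p.1) * ν a p.2) with hc
  -- Step 1+2: expand the quadratic form
  have h1 : star φ ⬝ᵥ ((ptA (Matrix.vecMulVec ψ (star ψ))) *ᵥ φ)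
      = ∑ p, ∑ q, (starRingEnd ℂ) (φ p) *
          (ψ (q.1, p.2) * (starRingEnd ℂ) (ψ (p.1, q.2)) * φ q) := by
    simp [dotProduct, mulVec, ptA, vecMulVec, Finset.mul_sum, mul_assoc]
  have h2 : ∑ p, ∑ q, (starRingEnd ℂ) (φ p) *
        (ψ (q.1, p.2) * (starRingEnd ℂ) (ψ (p.1, q.2)) * φ q)
      = ∑ a, ∑ b, ((lam a : ℂ) * lam b) * (c a b * (starRingEnd ℂ) (c b a)) := by
    simp only [hψ, hc, map_sum, _root_.map_mul, Finset.sum_mul, Finset.mul_sum]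
    rw [exch' (f := fun b a p q => (starRingEnd ℂ) (φ p) *
      ((lam a : ℂ) * μ a q.1 * ν a p.2 *
        ((starRingEnd ℂ) (lam b : ℂ) * (starRingEnd ℂ) (μ b p.1) * (starRingEnd ℂ) (ν b q.2)) * φ q))]
    rw [Finset.sum_comm]
    refine Finset.sum_congr rfl fun a _ => Finset.sum_congr rfl fun b _ => ?_
    rw [Finset.sum_comm]
    refine Finset.sum_congr rfl fun p _ => Finset.sum_congr rfl fun q _ => ?_
    simp only [_root_.map_mul, Complex.conj_conj, Complex.conj_ofReal]
    ring
  -- Bessel: ∑ ‖c a b‖² ≤ 1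
  have hBessel : ∑ a, ∑ b, ‖c a b‖ ^ 2 ≤ 1 := by
    set v : Fin d1 × Fin d1 → EuclideanSpace ℂ (Fin d1 × Fin d2) :=
      fun ab => WithLp.toLp 2 (fun p : Fin d1 × Fin d2 => (starRingEnd ℂ) (μ ab.2 p.1) * ν ab.1 p.2) with hv
    have hvon : Orthonormal ℂ v :=
      orthonormal_tensor μ hμ ν hν v (fun _ _ => rfl)
    set φE : EuclideanSpace ℂ (Fin d1 × Fin d2) := WithLp.toLp 2 φ with hφE
    have hnφ : ‖φE‖ ^ 2 = 1 := by
      rw [EuclideanSpace.norm_eq, Real.sq_sqrt (Finset.sum_nonneg fun _ _ => sq_nonneg _)]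
      rw [← hφ]
      exact Finset.sum_congr rfl fun x _ => by
        rw [← Complex.sq_norm]
    have hcv : ∀ a b, ‖c a b‖ = ‖(inner ℂ (v (a, b)) φE : ℂ)‖ := by
      intro a b
      rw [← norm_inner_symm]
      congr 1
      exact Finset.sum_congr rfl fun p _ => mul_comm _ _
    calc ∑ a, ∑ b, ‖c a b‖ ^ 2
        = ∑ ab : Fin d1 × Fin d1, ‖(inner ℂ (v ab) φE : ℂ)‖ ^ 2 := by
          rw [Fintype.sum_prod_type]
          exact Finset.sum_congr rfl fun a _ => Finset.sum_congr rfl fun b _ => by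
            rw [hcv a b]
      _ ≤ ‖φE‖ ^ 2 := hvon.sum_inner_products_le φE
      _ = 1 := hnφ
  -- the quadratic form is real
  set S : ℂ := ∑ a, ∑ b, ((lam a : ℂ) * lam b) * (c a b * (starRingEnd ℂ) (c b a)) with hS
  have hSconj : (starRingEnd ℂ) S = S := by
    rw [hS, map_sum]
    rw [Finset.sum_comm]
    refine Finset.sum_congr rfl fun a _ => ?_
    rw [map_sum]
    refine Finset.sum_congr rfl fun b _ => ?_
    simp only [_root_.map_mul, Complex.conj_conj, Complex.conj_ofReal]
    ring
  have hSim : S.im = 0 := Complex.conj_eq_iff_im.mp hSconj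
  -- bound the real part
  have hSre : S.re ≤ M := by
    have hre : S.re = ∑ a, ∑ b,
        (((lam a : ℂ) * lam b) * (c a b * (starRingEnd ℂ) (c b a))).re := by
      rw [hS, Complex.re_sum]
      exact Finset.sum_congr rfl fun a _ => Complex.re_sum _ _
    rw [hre]
    have key : ∀ a b, (((lam a : ℂ) * lam b) * (c a b * (starRingEnd ℂ) (c b a))).re
        ≤ M * ((‖c a b‖ ^ 2 + ‖c b a‖ ^ 2) / 2) := by
      intro a b
      have e1 : (((lam a : ℂ) * lam b) * (c a b * (starRingEnd ℂ) (c b a))).re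
          = (lam a * lam b) * (c a b * (starRingEnd ℂ) (c b a)).re := by
        rw [show ((lam a : ℂ) * lam b) = ((lam a * lam b : ℝ) : ℂ) by push_cast; ring]
        rw [Complex.re_ofReal_mul]
      rw [e1]
      have h3 : (c a b * (starRingEnd ℂ) (c b a)).re ≤ ‖c a b‖ * ‖c b a‖ := by
        calc (c a b * (starRingEnd ℂ) (c b a)).re
            ≤ ‖c a b * (starRingEnd ℂ) (c b a)‖ := Complex.re_le_norm _
          _ = ‖c a b‖ * ‖c b a‖ := by rw [norm_mul, RCLike.norm_conj]
      have h4 : ‖c a b‖ * ‖c b a‖ ≤ (‖c a b‖ ^ 2 + ‖c b a‖ ^ 2) / 2 := by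
        nlinarith [sq_nonneg (‖c a b‖ - ‖c b a‖)]
      have h5 : lam a * lam b ≤ M := by
        nlinarith [hMle a, hMle b, hlam a, hlam b, sq_nonneg (lam a - lam b)]
      have h6 : 0 ≤ lam a * lam b := mul_nonneg (hlam a) (hlam b)
      calc (lam a * lam b) * (c a b * (starRingEnd ℂ) (c b a)).re
          ≤ (lam a * lam b) * (‖c a b‖ * ‖c b a‖) := by
            exact mul_le_mul_of_nonneg_left h3 h6
        _ ≤ M * ((‖c a b‖ ^ 2 + ‖c b a‖ ^ 2) / 2) := by
            apply mul_le_mul h5 h4 (mul_nonneg (norm_nonneg _) (norm_nonneg _)) hM0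
    calc ∑ a, ∑ b, (((lam a : ℂ) * lam b) * (c a b * (starRingEnd ℂ) (c b a))).re
        ≤ ∑ a, ∑ b, M * ((‖c a b‖ ^ 2 + ‖c b a‖ ^ 2) / 2) :=
          Finset.sum_le_sum fun a _ => Finset.sum_le_sum fun b _ => key a b
      _ = M * (∑ a, ∑ b, ‖c a b‖ ^ 2) := by
          simp only [← Finset.mul_sum]
          congr 1
          have hswap : ∑ a, ∑ b, ‖c b a‖ ^ 2 = ∑ a, ∑ b, ‖c a b‖ ^ 2 := Finset.sum_comm
          have e : ∑ a, ∑ b, (‖c a b‖ ^ 2 + ‖c b a‖ ^ 2) / 2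
              = (∑ a, ∑ b, ‖c a b‖ ^ 2) / 2 + (∑ a, ∑ b, ‖c b a‖ ^ 2) / 2 := by
            simp [add_div, Finset.sum_add_distrib, Finset.sum_div]
          rw [e, hswap]
          ring
      _ ≤ M * 1 := mul_le_mul_of_nonneg_left hBessel hM0
      _ = M := mul_one M
  rw [h1, h2]
  rw [Complex.le_def]
  constructor
  · simpa using hSre
  · simp [hSim]
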